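/- Let p be an odd prime, let n ≥ 2 be an even natural number with p^a exactly dividing n (a ≥ 0), let l ≥ 1 be a natural number and k an integer. If there exist integers x_1, …, x_l and some j ≥ a+1 such that x_1^n + ⋯ + x_l^n ≡ k (mod p^j) and p ∤ x_i for some 1 ≤ i ≤ l, then for every i ≥ 1 there exist integers y_1, …, y_l with y_1^n + ⋯ + y_l^n ≡ k (mod p^i). -/

import Mathlib

/-- arithmetic: `v+2 ≤ 3^v` for `v ≥ 1`. -/
lemma aux_three_pow (v : ℕ) (hv : 1 ≤ v) : v + 2 ≤ 3 ^ v := by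
  induction v with
  | zero => omega
  | succ m ih =>
    rcases Nat.eq_zero_or_pos m with h | h
    · subst h; norm_num
    · have := ih h
      have h3 : 3 ^ m ≥ 1 := Nat.one_le_pow _ _ (by norm_num)
      calc m + 1 + 2 ≤ 3 ^ m + 1 := by omega
        _ ≤ 3 ^ m + 3 ^ m + 3 ^ m := by omega
        _ = 3 ^ (m + 1) := by ring

/-- `p^a ∣ n` gives `p^(a - min v a) ∣ C(n,k)` where `v = v_p(k)`. -/
lemma aux_choose_dvd (p n a k : ℕ) (hp : p.Prime) (hpa : p ^ a ∣ n)
    (hk : 1 ≤ k) (hkn : k ≤ n) :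
    p ^ (a - min (k.factorization p) a) ∣ n.choose k := by
  set v := k.factorization p with hv
  rcases le_or_gt a v with h | h
  · have : min v a = a := min_eq_right h
    rw [this]; simp
  · have hmin : min v a = v := min_eq_left h.le
    rw [hmin]
    -- p^a ∣ n ∣ choose n k * k
    have hd : n ∣ n.choose k * k := by
      obtain ⟨n', rfl⟩ : ∃ n', n = n' + 1 := ⟨n - 1, by omega⟩
      obtain ⟨k', rfl⟩ : ∃ k', k = k' + 1 := ⟨k - 1, by omega⟩
      have := Nat.add_one_mul_choose_eq n' k'
      exact ⟨n'.choose k', this.symm⟩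
    have hak : p ^ a ∣ n.choose k * k := hpa.trans hd
    -- write k = p^v * k'
    have hk0 : k ≠ 0 := by omega
    have hkdecomp : p ^ v * (k / p ^ v) = k := Nat.ordProj_mul_ordCompl_eq_self k p
    have hknd : ¬ p ∣ (k / p ^ v) := Nat.not_dvd_ordCompl hp hk0
    have h2 : p ^ a ∣ n.choose k * (p ^ v * (k / p ^ v)) := by rwa [hkdecomp]
    have h3 : p ^ (a - v) * p ^ v ∣ (n.choose k * (k / p ^ v)) * p ^ v := by
      rw [← pow_add]
      have : a - v + v = a := by omega
      rw [this]
      calc p ^ a ∣ n.choose k * (p ^ v * (k / p ^ v)) := h2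
        _ = n.choose k * (k / p ^ v) * p ^ v := by ring
    have h4 : p ^ (a - v) ∣ n.choose k * (k / p ^ v) :=
      (Nat.mul_dvd_mul_iff_right (Nat.pow_pos (n := v) hp.pos)).mp h3
    exact (Nat.Coprime.dvd_of_dvd_mul_right
      (Nat.Coprime.pow_left _ ((Nat.Prime.coprime_iff_not_dvd hp).mpr hknd)) h4)
lemma aux_term_dvd (p n a j k : ℕ) (hp : p.Prime) (hp2 : p ≠ 2) (hpa : p ^ a ∣ n)
    (hj : a + 1 ≤ j) (hk2 : 2 ≤ k) (hkn : k ≤ n) (x t : ℤ) :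
    (p : ℤ) ^ (j + 1) ∣ (t * (p : ℤ) ^ (j - a)) ^ k * x ^ (n - k) * (n.choose k : ℤ) := by
  obtain ⟨v, hv⟩ : ∃ v, v = k.factorization p := ⟨_, rfl⟩
  obtain ⟨s, hs⟩ : ∃ s, s = j - a := ⟨_, rfl⟩
  have hp3 : 3 ≤ p := by
    have := hp.two_le
    rcases Nat.lt_or_ge p 3 with h | h
    · interval_cases p <;> simp_all
    · exact h
  have hk0 : k ≠ 0 := by omega
  have hpv : p ^ v ≤ k := by rw [hv]; exact Nat.ordProj_le p hk0
  have hkv : v + 2 ≤ k := by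
    rcases Nat.eq_zero_or_pos v with h | h
    · omega
    · have h3 : 3 ^ v ≤ p ^ v := Nat.pow_le_pow_left hp3 v
      have := aux_three_pow v h
      omega
  -- exponent inequality
  have hexp : j + 1 ≤ (a - min v a) + k * s := by
    set w := min v a with hw
    have hwk : w + 2 ≤ k := by
      have : w ≤ v := min_le_left v a
      omega
    have hs1 : 1 ≤ s := by omega
    have e1 : (w + 2) * s ≤ k * s := Nat.mul_le_mul_right s hwk
    have e2 : (w + 2) * s = w * s + 2 * s := by ring
    have e3 : w * 1 ≤ w * s := Nat.mul_le_mul_left w hs1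
    have hwa : w ≤ a := min_le_right v a
    omega
  have hc : (p : ℤ) ^ (a - min v a) ∣ (n.choose k : ℤ) := by
    rw [hv]
    exact_mod_cast Int.natCast_dvd_natCast.mpr (aux_choose_dvd p n a k hp hpa (by omega) hkn)
  have hmain : (p : ℤ) ^ (j + 1) ∣ ((p : ℤ) ^ s) ^ k * (n.choose k : ℤ) := by
    obtain ⟨c, hc⟩ := hc
    refine ⟨(p : ℤ) ^ ((a - min v a) + k * s - (j + 1)) * c, ?_⟩
    have hmm : s * k = k * s := Nat.mul_comm s k
    rw [← pow_mul, hc]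
    calc (p:ℤ) ^ (s * k) * ((p:ℤ) ^ (a - min v a) * c)
        = (p:ℤ) ^ (s * k + (a - min v a)) * c := by rw [pow_add]; ring
      _ = (p:ℤ) ^ ((j + 1) + ((a - min v a) + k * s - (j + 1))) * c := by
          have hq : s * k + (a - min v a)
              = (j + 1) + ((a - min v a) + k * s - (j + 1)) := by
            rw [Nat.mul_comm]; omega
          rw [hq]
      _ = (p:ℤ) ^ (j + 1) * ((p:ℤ) ^ ((a - min v a) + k * s - (j + 1)) * c) := by
          rw [pow_add]; ring
  obtain ⟨c, hc'⟩ := hmain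
  exact ⟨c * (t ^ k * x ^ (n - k)), by
    rw [mul_pow, ← hs]; linear_combination (t ^ k * x ^ (n - k)) * hc'⟩
lemma aux_binom (p n a j : ℕ) (hp : p.Prime) (hp2 : p ≠ 2) (hn : 2 ≤ n)
    (hpa : p ^ a ∣ n) (hj : a + 1 ≤ j) (x t : ℤ) :
    (x + t * (p : ℤ) ^ (j - a)) ^ n ≡
      x ^ n + (n : ℤ) * x ^ (n - 1) * (t * (p : ℤ) ^ (j - a)) [ZMOD (p : ℤ) ^ (j + 1)] := by
  set z : ℤ := t * (p : ℤ) ^ (j - a) with hz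
  obtain ⟨m, rfl⟩ : ∃ m, n = m + 2 := ⟨n - 2, by omega⟩
  rw [add_comm x z, add_pow]
  rw [show m + 2 + 1 = (m + 1) + 1 + 1 from rfl]
  rw [Finset.sum_range_succ', Finset.sum_range_succ']
  have hS : (p : ℤ) ^ (j + 1) ∣
      ∑ i ∈ Finset.range (m + 1),
        z ^ (i + 1 + 1) * x ^ (m + 2 - (i + 1 + 1)) * ((m + 2).choose (i + 1 + 1) : ℤ) := by
    refine Finset.dvd_sum fun i hi => ?_
    have hi' : i + 1 + 1 ≤ m + 2 := by
      have := Finset.mem_range.mp hi; omega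
    exact aux_term_dvd p (m + 2) a j (i + 1 + 1) hp hp2 hpa hj (by omega) hi' x t
  obtain ⟨c, hc⟩ := hS
  refine Int.ModEq.symm (Int.modEq_iff_dvd.mpr ⟨c, ?_⟩)
  rw [hc]
  simp only [zero_add, Nat.choose_one_right, Nat.choose_zero_right, pow_zero, pow_one]
  push_cast
  ring
lemma aux_lift (p n a m : ℕ) (hp : p.Prime) (hp2 : p ≠ 2) (hn : 2 ≤ n)
    (hpa : p ^ a ∣ n) (hpa' : ¬ p ^ (a + 1) ∣ n) (hm : a + 1 ≤ m)
    (x c : ℤ) (hx : ¬ (p : ℤ) ∣ x) (hc : x ^ n ≡ c [ZMOD (p : ℤ) ^ m]) :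
    ∃ y : ℤ, ¬ (p : ℤ) ∣ y ∧ y ^ n ≡ c [ZMOD (p : ℤ) ^ (m + 1)] := by
  obtain ⟨u, hu⟩ := hpa
  have hpu : ¬ (p : ℤ) ∣ (u : ℤ) := by
    intro h
    rw [Int.natCast_dvd_natCast] at h
    exact hpa' (by rw [hu, pow_succ]; exact mul_dvd_mul_left _ h)
  obtain ⟨d, hd⟩ := Int.modEq_iff_dvd.mp hc
  have hw : ¬ (p : ℤ) ∣ (u : ℤ) * x ^ (n - 1) := by
    intro h
    rcases (Nat.prime_iff_prime_int.mp hp).dvd_mul.mp h with h' | h'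
    · exact hpu h'
    · exact hx ((Nat.prime_iff_prime_int.mp hp).dvd_of_dvd_pow h')
  have hcop : IsCoprime ((p : ℤ)) ((u : ℤ) * x ^ (n - 1)) :=
    (Nat.prime_iff_prime_int.mp hp).coprime_iff_not_dvd.mpr hw
  obtain ⟨r, s, hrs⟩ := hcop
  set t : ℤ := s * d with ht
  refine ⟨x + t * (p : ℤ) ^ (m - a), ?_, ?_⟩
  · intro h
    have h1 : (p : ℤ) ∣ (p : ℤ) ^ (m - a) := dvd_pow_self _ (by omega)
    exact hx (by
      have := dvd_sub h (h1.mul_left t)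
      simpa using this)
  · have hbin := aux_binom p n a m hp hp2 hn ⟨u, hu⟩ hm x t
    refine hbin.trans ?_
    have hnz : (n : ℤ) = (p : ℤ) ^ a * (u : ℤ) := by exact_mod_cast hu
    have hpow : (p : ℤ) ^ a * (p : ℤ) ^ (m - a) = (p : ℤ) ^ m := by
      rw [← pow_add]; congr 1; omega
    refine Int.modEq_iff_dvd.mpr ⟨d * r, ?_⟩
    rw [hnz, ht]
    linear_combination hd - (u : ℤ) * x ^ (n - 1) * s * d * hpow - (p : ℤ) ^ m * d * hrs

/-- Odd prime `p`, even `n ≥ 2`, `p^a || n`, `l ≥ 1`: a solution of the congruence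
mod `p^j` for some `j ≥ a+1` with some coordinate not divisible by `p` yields
solutions mod `p^i` for all `i ≥ 1`. -/
theorem stmt_2 (p n a l : ℕ) (k : ℤ) (hp : p.Prime) (hp2 : p ≠ 2)
    (hn : 2 ≤ n) (hneven : Even n)
    (hpa : p ^ a ∣ n ∧ ¬ p ^ (a + 1) ∣ n) (hl : 1 ≤ l)
    (hsol : ∃ j, a + 1 ≤ j ∧ ∃ x : Fin l → ℤ,
      ((∑ t, x t ^ n) ≡ k [ZMOD (p : ℤ) ^ j]) ∧ ∃ i, ¬ (p : ℤ) ∣ x i) :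
    ∀ i, 1 ≤ i → ∃ y : Fin l → ℤ, (∑ t, y t ^ n) ≡ k [ZMOD (p : ℤ) ^ i] := by
  classical
  obtain ⟨hpa1, hpa2⟩ := hpa
  obtain ⟨j, hj, x0, hx0, i0, hi0⟩ := hsol
  have key : ∀ m, j ≤ m → ∃ x : Fin l → ℤ,
      ((∑ t, x t ^ n) ≡ k [ZMOD (p : ℤ) ^ m]) ∧ ∃ i, ¬ (p : ℤ) ∣ x i := by
    intro m hm
    induction m, hm using Nat.le_induction with
    | base => exact ⟨x0, hx0, i0, hi0⟩
    | succ m hm ih =>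
      obtain ⟨x, hx, i, hi⟩ := ih
      have hc : x i ^ n ≡ k - ∑ t ∈ ({i}ᶜ : Finset (Fin l)), x t ^ n
          [ZMOD (p : ℤ) ^ m] := by
        rw [Fintype.sum_eq_add_sum_compl i (fun t => x t ^ n)] at hx
        have h2 := Int.ModEq.sub_right (∑ t ∈ ({i}ᶜ : Finset (Fin l)), x t ^ n) hx
        simpa using h2
      obtain ⟨y, hy, hyc⟩ :=
        aux_lift p n a m hp hp2 hn hpa1 hpa2 (by omega) (x i) _ hi hc
      refine ⟨Function.update x i y, ?_, i, by simpa using hy⟩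
      have hsum : (∑ t, Function.update x i y t ^ n)
          = y ^ n + ∑ t ∈ ({i}ᶜ : Finset (Fin l)), x t ^ n := by
        rw [Fintype.sum_eq_add_sum_compl i]
        simp only [Function.update_self]
        congr 1
        refine Finset.sum_congr rfl fun t ht => ?_
        have ht' : t ≠ i := by simpa using ht
        rw [Function.update_of_ne ht']
      rw [hsum]
      have h3 := Int.ModEq.add_right (∑ t ∈ ({i}ᶜ : Finset (Fin l)), x t ^ n) hyc
      simpa using h3
  intro i hi
  obtain ⟨x, hx, -⟩ := key (max i j) (le_max_right _ _)
  exact ⟨x, Int.ModEq.of_dvd (pow_dvd_pow _ (le_max_left _ _)) hx⟩
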